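/- Let F ⊣ U be an adjunction with U : K → Set, let j : K_fin ⊂ K be the full subcategory of objects k with U(k) a finite set, and assume the codensity monad T_j = Ran_j j exists. Then there is a functor Ω : Alg(T_j) → CompHaus from the Eilenberg–Moore category of T_j to compact Hausdorff spaces such that the underlying-set functor CompHaus → Set composed with Ω is naturally isomorphic to U ∘ U_{T_j}, where U_{T_j} : Alg(T_j) → K is the forgetful functor. -/

import Mathlib

/-! STATEMENT 10: given an adjunction `F ⊣ U : K ⥤ Set`, with `j : K_fin ⊂ K` the full
subcategory of objects with finite underlying set, assuming the codensity monad
`T_j = Ran_j j` exists, there is a functor `Ω : Alg(T_j) ⥤ CompHaus` such that the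
underlying-set functor of `CompHaus` composed with `Ω` is naturally isomorphic to
`U ∘ U_{T_j}`. -/

namespace CategoryTheory

open Functor Limits

noncomputable section

universe w w₂ v v₂ u u₂

namespace Codensity

variable {C : Type u} [Category.{v} C] {D : Type u₂} [Category.{v₂} D]
  (F : C ⥤ D) [F.HasRightKanExtension F]

/-- The underlying endofunctor of the codensity monad of `F`: the right Kan
extension of `F` along itself. -/
abbrev T : D ⥤ D := F.rightKanExtension F

/-- The counit of the right Kan extension. -/
abbrev ε : F ⋙ T F ⟶ F := F.rightKanExtensionCounit F

/-- The unit of the codensity monad. -/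
def unit : 𝟭 D ⟶ T F :=
  (T F).liftOfIsRightKanExtension (ε F) (𝟭 D) F.rightUnitor.hom

/-- The multiplication of the codensity monad. -/
def mul : T F ⋙ T F ⟶ T F :=
  (T F).liftOfIsRightKanExtension (ε F) (T F ⋙ T F)
    ((Functor.associator F (T F) (T F)).inv ≫ whiskerRight (ε F) (T F) ≫ ε F)

lemma unit_fac (X : C) : (unit F).app (F.obj X) ≫ (ε F).app X = 𝟙 (F.obj X) := by
  simp [unit]

lemma mul_fac (X : C) :
    (mul F).app (F.obj X) ≫ (ε F).app X
      = (T F).map ((ε F).app X) ≫ (ε F).app X := by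
  have h := (T F).liftOfIsRightKanExtension_fac_app (ε F)
    (T F ⋙ T F) ((Functor.associator F (T F) (T F)).inv ≫ whiskerRight (ε F) (T F) ≫ ε F) X
  simp only [NatTrans.comp_app, Functor.associator_inv_app, whiskerRight_app,
    Functor.comp_obj, Category.id_comp] at h
  simpa [mul] using h

lemma left_unit' : whiskerLeft (T F) (unit F) ≫ mul F = (T F).rightUnitor.hom := by
  apply (T F).hom_ext_of_isRightKanExtension (ε F)
  ext X
  have h := (unit F).naturality ((ε F).app X)
  simp only [Functor.comp_obj, Functor.id_obj, Functor.id_map] at h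
  simp only [NatTrans.comp_app, whiskerLeft_app, Functor.rightUnitor_hom_app,
    Functor.comp_obj, Functor.id_obj, Category.id_comp, Category.assoc]
  rw [mul_fac, ← Category.assoc, ← h, Category.assoc, unit_fac]
  simp

lemma right_unit' : whiskerRight (unit F) (T F) ≫ mul F = (T F).leftUnitor.hom := by
  apply (T F).hom_ext_of_isRightKanExtension (ε F)
  ext X
  simp only [NatTrans.comp_app, whiskerRight_app, whiskerLeft_app, Functor.leftUnitor_hom_app,
    Functor.comp_obj, Functor.id_obj, Category.id_comp, Category.assoc]
  rw [mul_fac, ← Category.assoc, ← Functor.map_comp, unit_fac]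
  simp

lemma assoc' :
    whiskerRight (mul F) (T F) ≫ mul F
      = (Functor.associator _ _ _).hom ≫ whiskerLeft (T F) (mul F) ≫ mul F := by
  apply (T F).hom_ext_of_isRightKanExtension (ε F)
  ext X
  have h := (mul F).naturality ((ε F).app X)
  simp only [Functor.comp_obj, Functor.comp_map] at h
  simp only [NatTrans.comp_app, whiskerRight_app, whiskerLeft_app, Functor.associator_hom_app,
    Functor.comp_obj, Category.id_comp, Category.assoc]
  conv_lhs => rw [mul_fac, ← Category.assoc, ← Functor.map_comp, mul_fac, Functor.map_comp,
    Category.assoc]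
  conv_rhs => rw [mul_fac, ← Category.assoc, ← h, Category.assoc, mul_fac]

end Codensity

/-- The codensity monad of a functor `F`, defined as the right Kan extension of `F`
along itself, with its canonical monad structure. -/
def codensityMonad {C : Type u} [Category.{v} C] {D : Type u₂} [Category.{v₂} D]
    (F : C ⥤ D) [F.HasRightKanExtension F] : Monad D where
  toFunctor := Codensity.T F
  η := Codensity.unit F
  μ := Codensity.mul F
  left_unit X := by
    simpa using NatTrans.congr_app (Codensity.left_unit' F) X
  right_unit X := by
    simpa using NatTrans.congr_app (Codensity.right_unit' F) X
  assoc X := by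
    simpa using NatTrans.congr_app (Codensity.assoc' F) X

end

end CategoryTheory

universe w' v' u'

open CategoryTheory Functor Limits

noncomputable section

variable {K : Type v'} [Category.{w'} K]

/-- The full subcategory of `K` of the objects whose underlying set is finite. -/
abbrev KFinite (U : K ⥤ Type u') := ObjectProperty.FullSubcategory (fun k : K => Finite (U.obj k))

/-- The inclusion `j : K_fin ⥤ K`. -/
abbrev jFinite (U : K ⥤ Type u') : KFinite U ⥤ K := ObjectProperty.ι _


namespace CodensityCH

open CategoryTheory Functor Limits

/-- The ultrafilter monad on `Type u'`. -/
noncomputable abbrev bM : Monad (Type u') := ofTypeMonad Ultrafilter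

/-- The principal element of an ultrafilter on a finite set. -/
noncomputable def prin {X : Type u'} [Finite X] (f : Ultrafilter X) : X :=
  (Ultrafilter.eq_pure_of_finite f).choose

lemma prin_spec {X : Type u'} [Finite X] (f : Ultrafilter X) : f = pure (prin f) :=
  (Ultrafilter.eq_pure_of_finite f).choose_spec

lemma pure_inj {X : Type u'} : Function.Injective (pure : X → Ultrafilter X) := by
  intro x y h
  have hx : ({x} : Set X) ∈ (pure x : Ultrafilter X) := Ultrafilter.mem_pure.2 rfl
  rw [h] at hx
  exact (Ultrafilter.mem_pure.1 hx).symm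

lemma prin_pure {X : Type u'} [Finite X] (x : X) : prin (pure x : Ultrafilter X) = x :=
  pure_inj (prin_spec (pure x : Ultrafilter X)).symm

instance {X : Type u'} [Finite X] : Finite (Ultrafilter X) :=
  Finite.of_surjective (pure : X → Ultrafilter X) fun f => ⟨prin f, (prin_spec f).symm⟩

section

variable {K' : Type v'} [Category.{w'} K'] (F : Type u' ⥤ K') (U : K' ⥤ Type u') (adj : F ⊣ U)
variable [(jFinite U).HasRightKanExtension (jFinite U)]

/-- For a finite object, the principal-element map `Ultrafilter (U k) → U k`. -/
noncomputable def pNat : jFinite U ⋙ (U ⋙ bM.toFunctor) ⟶ jFinite U ⋙ U where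
  app c := TypeCat.ofHom fun f => @prin _ c.property f
  naturality c c' g := by
    have h1 : Finite (U.obj ((jFinite U).obj c)) := c.property
    have h2 : Finite (U.obj ((jFinite U).obj c')) := c'.property
    ext f
    obtain ⟨x, rfl⟩ := @Ultrafilter.eq_pure_of_finite _ h1 f
    simp only [Functor.comp_obj, Functor.comp_map, types_comp_apply, ofTypeFunctor_map,
      map_pure]
    show @prin _ c'.property (pure (U.map ((jFinite U).map g) x))
      = U.map ((jFinite U).map g) (@prin _ c.property (pure x))
    rw [@prin_pure _ c'.property, @prin_pure _ c.property]

/-- The mate of `pNat` in `K'`. -/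
noncomputable def pK : jFinite U ⋙ ((U ⋙ bM.toFunctor) ⋙ F) ⟶ jFinite U where
  app c := (adj.homEquiv _ _).symm ((pNat U).app c)
  naturality c c' g := by
    have hp := (pNat U).naturality g
    dsimp only [Functor.comp_obj, Functor.comp_map] at hp ⊢
    rw [← Adjunction.homEquiv_naturality_right_symm, ← hp,
      Adjunction.homEquiv_naturality_left_symm]

/-- The universal map `F ∘ Ultrafilter ∘ U ⟶ T_j` in `K'`. -/
noncomputable def tau : (U ⋙ bM.toFunctor) ⋙ F ⟶ Codensity.T (jFinite U) :=
  (Codensity.T (jFinite U)).liftOfIsRightKanExtension (Codensity.ε (jFinite U)) _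
    (pK F U adj)

lemma tau_fac (c : KFinite U) :
    (tau F U adj).app ((jFinite U).obj c) ≫ (Codensity.ε (jFinite U)).app c
      = (pK F U adj).app c :=
  (Codensity.T (jFinite U)).liftOfIsRightKanExtension_fac_app (Codensity.ε (jFinite U)) _
    (pK F U adj) c

/-- The comparison `Ultrafilter ∘ U ⟶ U ∘ T_j`. -/
noncomputable def sigma : U ⋙ bM.toFunctor ⟶ Codensity.T (jFinite U) ⋙ U where
  app k := adj.homEquiv _ _ ((tau F U adj).app k)
  naturality x y g := by
    have ht := (tau F U adj).naturality g
    dsimp only [Functor.comp_obj, Functor.comp_map] at ht ⊢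
    rw [← Adjunction.homEquiv_naturality_right, ← ht,
      Adjunction.homEquiv_naturality_left]

lemma sigma_fac (c : KFinite U) :
    (sigma F U adj).app ((jFinite U).obj c) ≫ U.map ((Codensity.ε (jFinite U)).app c)
      = (pNat U).app c := by
  dsimp only [sigma]
  rw [← Adjunction.homEquiv_naturality_right, tau_fac]
  simp [pK]

include adj in
lemma ext_lemma {G : K' ⥤ Type u'} (φ₁ φ₂ : G ⟶ Codensity.T (jFinite U) ⋙ U)
    (h : ∀ c : KFinite U,
      φ₁.app ((jFinite U).obj c) ≫ U.map ((Codensity.ε (jFinite U)).app c)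
        = φ₂.app ((jFinite U).obj c) ≫ U.map ((Codensity.ε (jFinite U)).app c)) :
    φ₁ = φ₂ := by
  let Θ : (G ⟶ Codensity.T (jFinite U) ⋙ U) → (G ⋙ F ⟶ Codensity.T (jFinite U)) :=
    fun φ =>
      { app := fun x => (adj.homEquiv _ _).symm (φ.app x)
        naturality := fun x y g => by
          have hφ := φ.naturality g
          dsimp only [Functor.comp_obj, Functor.comp_map] at hφ ⊢
          rw [← Adjunction.homEquiv_naturality_left_symm, hφ,
            Adjunction.homEquiv_naturality_right_symm] }
  have hΘ : Θ φ₁ = Θ φ₂ := by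
    apply (Codensity.T (jFinite U)).hom_ext_of_isRightKanExtension
      (Codensity.ε (jFinite U))
    apply NatTrans.ext
    funext c
    have key : ∀ φ : G ⟶ Codensity.T (jFinite U) ⋙ U,
        (whiskerLeft (jFinite U) (Θ φ) ≫ Codensity.ε (jFinite U)).app c
          = (adj.homEquiv _ _).symm
              (φ.app ((jFinite U).obj c) ≫ U.map ((Codensity.ε (jFinite U)).app c)) := by
      intro φ
      dsimp only [NatTrans.comp_app, whiskerLeft_app, Θ]
      rw [Adjunction.homEquiv_naturality_right_symm]
    rw [key, key, h c]
  apply NatTrans.ext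
  funext x
  have hx := congrArg (fun ψ : G ⋙ F ⟶ Codensity.T (jFinite U) => ψ.app x) hΘ
  dsimp only [Θ] at hx
  exact (adj.homEquiv _ _).symm.injective hx

lemma unit_coh (k : K') :
    bM.η.app (U.obj k) ≫ (sigma F U adj).app k
      = U.map ((Codensity.unit (jFinite U)).app k) := by
  let φ₁ : U ⟶ Codensity.T (jFinite U) ⋙ U :=
    { app := fun k => bM.η.app (U.obj k) ≫ (sigma F U adj).app k
      naturality := fun x y g => by
        have h1 := bM.η.naturality (U.map g)
        have h2 := (sigma F U adj).naturality g
        dsimp only [Functor.comp_obj, Functor.comp_map, Functor.id_obj, Functor.id_map]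
          at h1 h2 ⊢
        rw [← Category.assoc, h1, Category.assoc, h2, Category.assoc] }
  let φ₂ : U ⟶ Codensity.T (jFinite U) ⋙ U :=
    { app := fun k => U.map ((Codensity.unit (jFinite U)).app k)
      naturality := fun x y g => by
        have h1 := (Codensity.unit (jFinite U)).naturality g
        dsimp only [Functor.comp_obj, Functor.comp_map, Functor.id_obj, Functor.id_map] at h1 ⊢
        rw [← U.map_comp, ← U.map_comp, h1] }
  have h : φ₁ = φ₂ := by
    apply ext_lemma F U adj
    intro c
    have hfin : Finite (U.obj ((jFinite U).obj c)) := c.property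
    dsimp only [φ₁, φ₂]
    rw [Category.assoc, sigma_fac, ← U.map_comp, Codensity.unit_fac]
    ext x
    simp only [CategoryTheory.Functor.map_id, types_comp_apply, types_id_apply]
    show @prin _ c.property (pure x) = x
    rw [@prin_pure _ c.property]
  exact NatTrans.congr_app h k

lemma mul_coh (k : K') :
    bM.μ.app (U.obj k) ≫ (sigma F U adj).app k
      = bM.toFunctor.map ((sigma F U adj).app k)
          ≫ (sigma F U adj).app ((Codensity.T (jFinite U)).obj k)
          ≫ U.map ((Codensity.mul (jFinite U)).app k) := by
  let φ₁ : U ⋙ bM.toFunctor ⋙ bM.toFunctor ⟶ Codensity.T (jFinite U) ⋙ U :=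
    { app := fun k => bM.μ.app (U.obj k) ≫ (sigma F U adj).app k
      naturality := fun x y g => by
        have h1 := bM.μ.naturality (U.map g)
        have h2 := (sigma F U adj).naturality g
        dsimp only [Functor.comp_obj, Functor.comp_map] at h1 h2 ⊢
        rw [← Category.assoc, h1, Category.assoc, h2, Category.assoc] }
  let φ₂ : U ⋙ bM.toFunctor ⋙ bM.toFunctor ⟶ Codensity.T (jFinite U) ⋙ U :=
    { app := fun k => bM.toFunctor.map ((sigma F U adj).app k)
          ≫ (sigma F U adj).app ((Codensity.T (jFinite U)).obj k)
          ≫ U.map ((Codensity.mul (jFinite U)).app k)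
      naturality := fun x y g => by
        have h2 := (sigma F U adj).naturality g
        have h3 := (sigma F U adj).naturality ((Codensity.T (jFinite U)).map g)
        have h4 := (Codensity.mul (jFinite U)).naturality g
        dsimp only [Functor.comp_obj, Functor.comp_map] at h2 h3 h4 ⊢
        rw [← Category.assoc, ← bM.toFunctor.map_comp, h2, bM.toFunctor.map_comp,
          Category.assoc, reassoc_of% h3, ← U.map_comp, h4, U.map_comp]
        simp only [Category.assoc] }
  have h : φ₁ = φ₂ := by
    apply ext_lemma F U adj
    intro c
    haveI hfin : Finite (U.obj ((jFinite U).obj c)) := c.property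
    dsimp only [φ₁, φ₂]
    have h3 := (sigma F U adj).naturality ((Codensity.ε (jFinite U)).app c)
    dsimp only [Functor.comp_obj, Functor.comp_map] at h3
    simp only [Category.assoc]
    rw [sigma_fac]
    rw [← U.map_comp, Codensity.mul_fac, U.map_comp]
    rw [← reassoc_of% h3]
    rw [sigma_fac]
    rw [← Category.assoc, ← bM.toFunctor.map_comp, sigma_fac]
    ext FF
    haveI : Finite (bM.obj (U.obj ((jFinite U).obj c))) :=
      inferInstanceAs (Finite (Ultrafilter _))
    obtain ⟨f, rfl⟩ := Ultrafilter.eq_pure_of_finite FF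
    obtain ⟨x, rfl⟩ := Ultrafilter.eq_pure_of_finite f
    show @prin _ c.property (joinM (pure (pure x)))
      = @prin _ c.property (Ultrafilter.map ((pNat U).app c) (pure (pure x)))
    erw [joinM_pure, Ultrafilter.map_pure]
    show @prin _ c.property (pure x) = @prin _ c.property (pure (@prin _ c.property (pure x)))
    rw [@prin_pure _ c.property, @prin_pure _ c.property]
  exact NatTrans.congr_app h k

/-- Lifting algebras of the codensity monad to compacta. -/
noncomputable def algFunctor :
    (codensityMonad (jFinite U)).Algebra ⥤ Compactum where
  obj A :=
    { A := U.obj A.A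
      a := (sigma F U adj).app A.A ≫ U.map A.a
      unit := by
        have hA : (Codensity.unit (jFinite U)).app A.A ≫ A.a = 𝟙 A.A := A.unit
        rw [← Category.assoc, unit_coh F U adj A.A]
        erw [← U.map_comp, hA]
        exact U.map_id A.A
      assoc := by
        have hA : (Codensity.mul (jFinite U)).app A.A ≫ A.a
            = (Codensity.T (jFinite U)).map A.a ≫ A.a := A.assoc
        have h2 : bM.toFunctor.map (U.map A.a) ≫ (sigma F U adj).app A.A
            = (sigma F U adj).app ((Codensity.T (jFinite U)).obj A.A)
              ≫ U.map ((Codensity.T (jFinite U)).map A.a) :=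
          (sigma F U adj).naturality A.a
        rw [← Category.assoc, mul_coh F U adj A.A]
        simp only [Category.assoc]
        erw [← U.map_comp, hA]
        erw [U.map_comp, ← reassoc_of% h2, ← Category.assoc,
          ← bM.toFunctor.map_comp] }
  map {A B} f :=
    { f := U.map f.f
      h := by
        have h2 : bM.toFunctor.map (U.map f.f) ≫ (sigma F U adj).app B.A
            = (sigma F U adj).app A.A ≫ U.map ((Codensity.T (jFinite U)).map f.f) :=
          (sigma F U adj).naturality f.f
        have hf : (Codensity.T (jFinite U)).map f.f ≫ B.a = A.a ≫ f.f := f.h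
        dsimp only
        rw [← Category.assoc, h2, Category.assoc]
        erw [← U.map_comp, hf]
        erw [U.map_comp]
        simp only [Category.assoc] }
  map_id A := by
    apply Monad.Algebra.Hom.ext
    exact U.map_id _
  map_comp f g := by
    apply Monad.Algebra.Hom.ext
    exact U.map_comp _ _

end

end CodensityCH

theorem algebras_of_codensity_monad_map_to_compact_hausdorff_spaces
    (F : Type u' ⥤ K) (U : K ⥤ Type u') (adj : F ⊣ U)
    [(jFinite U).HasRightKanExtension (jFinite U)] :
    Nonempty (Σ' Ω : (codensityMonad (jFinite U)).Algebra ⥤ CompHaus.{u'},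
      Ω ⋙ forget CompHaus ≅ (codensityMonad (jFinite U)).forget ⋙ U) := by
  classical
  refine ⟨⟨CodensityCH.algFunctor F U adj ⋙ compactumToCompHaus, ?_⟩⟩
  exact NatIso.ofComponents (fun A => Iso.refl _) (by intros; rfl)


end
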